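/- Let F : X → Y between Hilbert spaces satisfy the coercivity (Lipschitz stability) condition C‖F(u) − F(u*)‖ ≥ ‖u − u*‖^α for some C > 0, α ≥ 1, and all u in a set B containing all Landweber iterates. If additionally the residual sum bound ∑_{j=0}^k ‖F(u_j) − φ‖² ≤ (1/μ)‖u_0 − u*‖² holds and ‖u_k − u*‖ is nonincreasing, then the iterates converge with the rate ‖u_k − u*‖^{2α} ≤ (C²/(μ k))‖u_0 − u*‖², i.e., ‖u_k − u*‖ = O(k^{−1/(2α)}). -/
import Mathlib


open Finset

/-- Convergence rate of the lower-level Landweber iteration under coercivity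
(Lipschitz-type stability): `‖u_k − u*‖^{2α} ≤ (C²/(μ k))‖u₀ − u*‖²`. -/
theorem landweber_rate_under_coercivity
    {X Y : Type*} [NormedAddCommGroup X] [InnerProductSpace ℝ X]
    [NormedAddCommGroup Y] [InnerProductSpace ℝ Y]
    (F : X → Y) (B : Set X) (ustar : X) (φ : Y) (hsol : F ustar = φ)
    (C α μ : ℝ) (hC : 0 < C) (hα : 1 ≤ α) (hμ : 0 < μ)
    (hcoe : ∀ u ∈ B, C * ‖F u - F ustar‖ ≥ ‖u - ustar‖ ^ α)
    (u : ℕ → X) (hin : ∀ k, u k ∈ B)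
    (hmono : Antitone (fun k => ‖u k - ustar‖))
    (hsum : ∀ k : ℕ, ∑ j ∈ range (k + 1), ‖F (u j) - φ‖ ^ 2
      ≤ (1 / μ) * ‖u 0 - ustar‖ ^ 2) :
    ∀ k : ℕ, 1 ≤ k →
      ‖u k - ustar‖ ^ (2 * α) ≤ (C ^ 2 / (μ * k)) * ‖u 0 - ustar‖ ^ 2 := by
  intro k hk
  have hk0 : (0:ℝ) < k := by exact_mod_cast hk
  set a : ℝ := ‖u k - ustar‖ with ha
  have ha0 : 0 ≤ a := norm_nonneg _
  -- key pointwise bound: a^(2α) ≤ C^2 * ‖F (u j) - φ‖^2 for j ≤ k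
  have key : ∀ j ∈ range (k + 1), a ^ (2 * α) ≤ C ^ 2 * ‖F (u j) - φ‖ ^ 2 := by
    intro j hj
    have hjk : j ≤ k := Nat.lt_succ_iff.mp (mem_range.mp hj)
    have h1 : a ≤ ‖u j - ustar‖ := hmono hjk
    have h2 : a ^ α ≤ ‖u j - ustar‖ ^ α :=
      Real.rpow_le_rpow ha0 h1 (by linarith)
    have h3 : ‖u j - ustar‖ ^ α ≤ C * ‖F (u j) - φ‖ := by
      have := hcoe (u j) (hin j)
      rwa [hsol] at this
    have h4 : a ^ α ≤ C * ‖F (u j) - φ‖ := h2.trans h3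
    have h5 : (a ^ α) ^ 2 ≤ (C * ‖F (u j) - φ‖) ^ 2 := by
      have hnn : 0 ≤ a ^ α := Real.rpow_nonneg ha0 _
      exact pow_le_pow_left₀ hnn h4 2
    calc a ^ (2 * α) = (a ^ α) ^ 2 := by
          rw [mul_comm, Real.rpow_mul ha0, Real.rpow_two]
      _ ≤ (C * ‖F (u j) - φ‖) ^ 2 := h5
      _ = C ^ 2 * ‖F (u j) - φ‖ ^ 2 := by ring
  have hsumk := hsum k
  have hcard : ((k + 1 : ℕ) : ℝ) * a ^ (2 * α)
      ≤ C ^ 2 * ((1 / μ) * ‖u 0 - ustar‖ ^ 2) := by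
    have := Finset.sum_le_sum key
    simp only [Finset.sum_const, Finset.card_range, nsmul_eq_mul] at this
    calc ((k + 1 : ℕ) : ℝ) * a ^ (2 * α)
        ≤ ∑ j ∈ range (k + 1), C ^ 2 * ‖F (u j) - φ‖ ^ 2 := this
      _ = C ^ 2 * ∑ j ∈ range (k + 1), ‖F (u j) - φ‖ ^ 2 := by
          rw [Finset.mul_sum]
      _ ≤ C ^ 2 * ((1 / μ) * ‖u 0 - ustar‖ ^ 2) := by
          exact mul_le_mul_of_nonneg_left hsumk (by positivity)
  have hnn : 0 ≤ a ^ (2 * α) := Real.rpow_nonneg ha0 _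
  have hk1 : (k:ℝ) * a ^ (2 * α) ≤ ((k + 1 : ℕ) : ℝ) * a ^ (2 * α) := by
    apply mul_le_mul_of_nonneg_right _ hnn
    push_cast; linarith
  have := hk1.trans hcard
  have h2 : μ * (↑k * a ^ (2 * α)) ≤ C ^ 2 * ‖u 0 - ustar‖ ^ 2 := by
    have := mul_le_mul_of_nonneg_left this hμ.le
    calc μ * (↑k * a ^ (2 * α)) ≤ μ * (C ^ 2 * (1 / μ * ‖u 0 - ustar‖ ^ 2)) := this
      _ = C ^ 2 * ‖u 0 - ustar‖ ^ 2 := by field_simp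
  rw [div_mul_eq_mul_div, le_div_iff₀ (by positivity)]
  nlinarith [h2]
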